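/- If Y and Z are subsets of a topological space X each admitting a Noetherian outer base in X, then Y ∪ Z admits a Noetherian outer base in X. -/

import Mathlib

universe u

/-- A family of sets is Noetherian iff it contains no infinite strictly
`⊆`-increasing sequence. -/
def NoetherianFamily {α : Type u} (B : Set (Set α)) : Prop :=
  ¬ ∃ f : ℕ → Set α, (∀ n, f n ∈ B) ∧ StrictMono f

/-- `B` is an outer base of `Y` in `X`. -/
def IsOuterBase {X : Type u} [TopologicalSpace X] (Y : Set X) (B : Set (Set X)) : Prop :=
  (∀ G ∈ B, IsOpen G) ∧
    ∀ p ∈ Y, ∀ U : Set X, IsOpen U → p ∈ U → ∃ G ∈ B, p ∈ G ∧ G ⊆ U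

lemma noeth_union {α : Type u} {B₁ B₂ : Set (Set α)}
    (h₁ : NoetherianFamily B₁) (h₂ : NoetherianFamily B₂) :
    NoetherianFamily (B₁ ∪ B₂) := by
  rintro ⟨f, hf, hmono⟩
  have key : ∀ (B : Set (Set α)), NoetherianFamily B → ({n : ℕ | f n ∈ B}).Infinite → False := by
    intro B hB hinf
    have hex : ∀ n : ℕ, ∃ m ∈ {n : ℕ | f n ∈ B}, n < m := hinf.exists_gt
    choose g hg hlt using hex
    set F : ℕ → ℕ := fun n => Nat.rec (g 0) (fun _ k => g k) n with hF
    have hFmem : ∀ n, f (F n) ∈ B := by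
      intro n; cases n with
      | zero => exact hg 0
      | succ k => exact hg (F k)
    have hFmono : StrictMono F := strictMono_nat_of_lt_succ (fun n => hlt (F n))
    exact hB ⟨fun n => f (F n), hFmem, fun a b hab => hmono (hFmono hab)⟩
  have : {n : ℕ | f n ∈ B₁}.Infinite ∨ {n : ℕ | f n ∈ B₂}.Infinite := by
    by_contra h
    push_neg at h
    have : (Set.univ : Set ℕ).Finite := by
      have : (Set.univ : Set ℕ) ⊆ {n | f n ∈ B₁} ∪ {n | f n ∈ B₂} := by
        intro n _
        rcases hf n with h | h
        · exact Or.inl h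
        · exact Or.inr h
      exact (h.1.union h.2).subset this
    exact Set.infinite_univ this
  rcases this with h | h
  · exact key B₁ h₁ h
  · exact key B₂ h₂ h

/-- If `Y` and `Z` admit Noetherian outer bases in `X`, then so does `Y ∪ Z`. -/
theorem stmt4 {X : Type u} [TopologicalSpace X] (Y Z : Set X)
    (hY : ∃ B : Set (Set X), IsOuterBase Y B ∧ NoetherianFamily B)
    (hZ : ∃ B : Set (Set X), IsOuterBase Z B ∧ NoetherianFamily B) :
    ∃ B : Set (Set X), IsOuterBase (Y ∪ Z) B ∧ NoetherianFamily B := by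
  obtain ⟨B₁, hB₁, hN₁⟩ := hY
  obtain ⟨B₂, hB₂, hN₂⟩ := hZ
  refine ⟨B₁ ∪ B₂, ⟨?_, ?_⟩, noeth_union hN₁ hN₂⟩
  · rintro G (h | h)
    · exact hB₁.1 G h
    · exact hB₂.1 G h
  · rintro p (hp | hp) U hU hpU
    · obtain ⟨G, hG, h⟩ := hB₁.2 p hp U hU hpU
      exact ⟨G, Or.inl hG, h⟩
    · obtain ⟨G, hG, h⟩ := hB₂.2 p hp U hU hpU
      exact ⟨G, Or.inr hG, h⟩
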